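/- Let S = {b_1,...,b_m} be positive integers with sum 2T and m >= 20, and consider the fair division instance with 3 agents and m+2 goods where agent 1 values each of g_1,...,g_m at T, values d_1 at 4T, and d_2 at T, while agents 2 and 3 value g_i at b_i, d_1 at 5T, and d_2 at (m-2)T. If the indices [m] admit a partition into S_1, S_2 with sum of b_i over each part equal to T, then the randomized allocation giving agent 1 the good d_2, agent 2 the goods {g_i : i in S_1}, agent 3 the goods {g_i : i in S_2}, and giving d_1 to agent 1 with probability 5/13 and to agents 2 and 3 with probability 4/13 each, is ex-ante EQ and ex-post EQ1. -/

import Mathlib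

open Finset

/-- An allocation is a partition of the goods among the agents. -/
def isPartition {ι γ : Type*} [Fintype ι] [Fintype γ] [DecidableEq γ]
    (A : ι → Finset γ) : Prop :=
  (∀ i j, i ≠ j → Disjoint (A i) (A j)) ∧ Finset.univ.biUnion A = Finset.univ

/-- Additive value of a bundle. -/
def bundleVal {γ : Type*} (v : γ → ℚ) (S : Finset γ) : ℚ := ∑ g ∈ S, v g

/-- EQ1: for every pair of agents `i, j` with `A i` nonempty, some good can be
removed from `A i` so that `i`'s value drops to at most `j`'s value. -/
def EQ1 {ι γ : Type*} [DecidableEq γ] (v : ι → γ → ℚ) (A : ι → Finset γ) : Prop :=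
  ∀ i j, A i ≠ ∅ → ∃ g ∈ A i, bundleVal (v i) ((A i).erase g) ≤ bundleVal (v j) (A j)

/-- Valuations of the weak-NP-hardness reduction (Fig. 2): goods are
`g_1, …, g_m` (`Sum.inl`) plus `d_1 = Sum.inr 0` and `d_2 = Sum.inr 1`. -/
def vRed (m : ℕ) (T : ℤ) (b : Fin m → ℤ) : Fin 3 → (Fin m ⊕ Fin 2) → ℚ :=
  fun i g =>
    match g with
    | Sum.inl j => if i = 0 then (T : ℚ) else (b j : ℚ)
    | Sum.inr 0 => if i = 0 then 4 * (T : ℚ) else 5 * (T : ℚ)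
    | Sum.inr 1 => if i = 0 then (T : ℚ) else ((m : ℚ) - 2) * (T : ℚ)

/-- The three integral allocations in the support: agent 1 gets `d₂`,
agent 2 gets `{g_i : i ∈ S₁}`, agent 3 gets `{g_i : i ∈ S₂}`, and `d₁` goes to
agent `k` in allocation `redAlloc S₁ S₂ k`. -/
def redAlloc {m : ℕ} (S₁ S₂ : Finset (Fin m)) (k : Fin 3) :
    Fin 3 → Finset (Fin m ⊕ Fin 2) :=
  fun i =>
    (if i = 0 then {Sum.inr 1}
     else if i = 1 then S₁.image Sum.inl
     else S₂.image Sum.inl) ∪ (if i = k then {Sum.inr 0} else ∅)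

lemma bv_image' {m : ℕ} (v : Fin m ⊕ Fin 2 → ℚ) (S : Finset (Fin m)) :
    bundleVal v (S.image Sum.inl) = ∑ j ∈ S, v (Sum.inl j) :=
  Finset.sum_image (fun _ _ _ _ h => Sum.inl_injective h)

lemma bv_erase' {γ : Type*} [DecidableEq γ] (v : γ → ℚ) (S : Finset γ) {g : γ} (hg : g ∈ S) :
    bundleVal v (S.erase g) = bundleVal v S - v g :=
  Finset.sum_erase_eq_sub hg

set_option maxHeartbeats 2000000 in
/-- in a `yes` instance of 2-partition, the randomized allocation
giving `d₁` to agent 1 with probability `5/13` and to agents 2 and 3 with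
probability `4/13` each is ex-ante EQ and ex-post EQ1. -/
theorem stmt4 (m : ℕ) (hm : 20 ≤ m) (T : ℤ) (b : Fin m → ℤ)
    (hb : ∀ i, 0 < b i) (hsum : ∑ i, b i = 2 * T)
    (S₁ S₂ : Finset (Fin m)) (hdisj : Disjoint S₁ S₂) (hcover : S₁ ∪ S₂ = Finset.univ)
    (hS₁ : ∑ i ∈ S₁, b i = T) (hS₂ : ∑ i ∈ S₂, b i = T) :
    (∀ k : Fin 3, isPartition (redAlloc S₁ S₂ k) ∧ EQ1 (vRed m T b) (redAlloc S₁ S₂ k)) ∧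
    (∀ i j : Fin 3,
      (∑ k : Fin 3, (![5/13, 4/13, 4/13] : Fin 3 → ℚ) k *
          bundleVal (vRed m T b i) (redAlloc S₁ S₂ k i)) =
      (∑ k : Fin 3, (![5/13, 4/13, 4/13] : Fin 3 → ℚ) k *
          bundleVal (vRed m T b j) (redAlloc S₁ S₂ k j))) := by
  have hS₁Q : ∑ j ∈ S₁, (b j : ℚ) = (T:ℚ) := by push_cast [← hS₁]; ring
  have hS₂Q : ∑ j ∈ S₂, (b j : ℚ) = (T:ℚ) := by push_cast [← hS₂]; ring
  have hTZ : (0:ℤ) < T := by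
    have h1 : (0:ℤ) < ∑ i, b i :=
      Finset.sum_pos (fun i _ => hb i) ⟨⟨0, by omega⟩, Finset.mem_univ _⟩
    omega
  have hTpos : (0:ℚ) < (T:ℚ) := by exact_mod_cast hTZ
  have hbQ : ∀ j : Fin m, (0:ℚ) ≤ (b j : ℚ) := fun j => by exact_mod_cast (hb j).le
  have htot : ∀ k j : Fin 3, bundleVal (vRed m T b j) (redAlloc S₁ S₂ k j) =
      (T:ℚ) + (if j = k then (if j = 0 then 4*(T:ℚ) else 5*(T:ℚ)) else 0) := by
    intro k j
    fin_cases j <;> fin_cases k <;>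
      simp [redAlloc, bundleVal, vRed, Finset.sum_union, Finset.sum_image,
        Sum.inl_injective, hS₁Q, hS₂Q] <;> ring
  have hge : ∀ k j : Fin 3, (T:ℚ) ≤ bundleVal (vRed m T b j) (redAlloc S₁ S₂ k j) := by
    intro k j; rw [htot]; split_ifs <;> linarith
  have hle : ∀ k i : Fin 3, redAlloc S₁ S₂ k i ≠ ∅ →
      ∃ g ∈ redAlloc S₁ S₂ k i,
        bundleVal (vRed m T b i) ((redAlloc S₁ S₂ k i).erase g) ≤ (T:ℚ) := by
    intro k i hne
    fin_cases k <;> fin_cases i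
    case _ => -- k=0 i=0 : remove d₁
      refine ⟨(Sum.inr 0 : Fin m ⊕ Fin 2), by simp [redAlloc], ?_⟩
      rw [bv_erase' _ _ (by simp [redAlloc]), htot]
      simp [vRed]
    case _ => -- k=0 i=1 : bundle S₁
      have h1 : (S₁.image (Sum.inl : Fin m → Fin m ⊕ Fin 2)).Nonempty := by
        rw [Finset.nonempty_iff_ne_empty]
        simpa [redAlloc] using hne
      obtain ⟨g, hg⟩ := h1
      obtain ⟨j, hj, rfl⟩ := Finset.mem_image.1 hg
      refine ⟨Sum.inl j, by simp [redAlloc]; first | exact hj | exact ⟨j, hj, rfl⟩, ?_⟩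
      rw [bv_erase' _ _ (by simp [redAlloc]; first | exact hj | exact ⟨j, hj, rfl⟩), htot]
      simp [vRed]
      linarith [hb j]
    case _ => -- k=0 i=2
      have h1 : (S₂.image (Sum.inl : Fin m → Fin m ⊕ Fin 2)).Nonempty := by
        rw [Finset.nonempty_iff_ne_empty]
        simpa [redAlloc] using hne
      obtain ⟨g, hg⟩ := h1
      obtain ⟨j, hj, rfl⟩ := Finset.mem_image.1 hg
      refine ⟨Sum.inl j, by simp [redAlloc]; first | exact hj | exact ⟨j, hj, rfl⟩, ?_⟩
      rw [bv_erase' _ _ (by simp [redAlloc]; first | exact hj | exact ⟨j, hj, rfl⟩), htot]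
      simp [vRed]
      linarith [hb j]
    case _ => -- k=1 i=0 : remove d₂
      refine ⟨(Sum.inr 1 : Fin m ⊕ Fin 2), by simp [redAlloc], ?_⟩
      rw [bv_erase' _ _ (by simp [redAlloc]), htot]
      simp [vRed]
      linarith
    case _ => -- k=1 i=1 : remove d₁
      refine ⟨(Sum.inr 0 : Fin m ⊕ Fin 2), by simp [redAlloc], ?_⟩
      rw [bv_erase' _ _ (by simp [redAlloc]), htot]
      simp [vRed]
    case _ => -- k=1 i=2
      have h1 : (S₂.image (Sum.inl : Fin m → Fin m ⊕ Fin 2)).Nonempty := by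
        rw [Finset.nonempty_iff_ne_empty]
        simpa [redAlloc] using hne
      obtain ⟨g, hg⟩ := h1
      obtain ⟨j, hj, rfl⟩ := Finset.mem_image.1 hg
      refine ⟨Sum.inl j, by simp [redAlloc]; first | exact hj | exact ⟨j, hj, rfl⟩, ?_⟩
      rw [bv_erase' _ _ (by simp [redAlloc]; first | exact hj | exact ⟨j, hj, rfl⟩), htot]
      simp [vRed]
      linarith [hb j]
    case _ => -- k=2 i=0
      refine ⟨(Sum.inr 1 : Fin m ⊕ Fin 2), by simp [redAlloc], ?_⟩
      rw [bv_erase' _ _ (by simp [redAlloc]), htot]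
      simp [vRed]
      linarith
    case _ => -- k=2 i=1
      have h1 : (S₁.image (Sum.inl : Fin m → Fin m ⊕ Fin 2)).Nonempty := by
        rw [Finset.nonempty_iff_ne_empty]
        simpa [redAlloc] using hne
      obtain ⟨g, hg⟩ := h1
      obtain ⟨j, hj, rfl⟩ := Finset.mem_image.1 hg
      refine ⟨Sum.inl j, by simp [redAlloc]; first | exact hj | exact ⟨j, hj, rfl⟩, ?_⟩
      rw [bv_erase' _ _ (by simp [redAlloc]; first | exact hj | exact ⟨j, hj, rfl⟩), htot]
      simp [vRed]
      linarith [hb j]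
    case _ => -- k=2 i=2 : remove d₁
      refine ⟨(Sum.inr 0 : Fin m ⊕ Fin 2), by simp [redAlloc], ?_⟩
      rw [bv_erase' _ _ (by simp [redAlloc]), htot]
      simp [vRed]
  have hd : Disjoint (S₁.image (Sum.inl : Fin m → Fin m ⊕ Fin 2)) (S₂.image Sum.inl) :=
    (Finset.disjoint_image Sum.inl_injective).2 hdisj
  have h2fin : ∀ i : Fin 3, ¬i = 0 → ¬i = 1 → i = 2 := by decide
  refine ⟨fun k => ⟨⟨?_, ?_⟩, fun i j hne => ?_⟩, fun i j => ?_⟩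
  · -- disjointness
    intro i j hij
    rw [Finset.disjoint_left]
    intro a ha haj
    simp only [redAlloc, Finset.mem_union] at ha haj
    rcases ha with ha | ha <;> rcases haj with haj | haj <;>
      split_ifs at ha haj <;>
      first
        | exact Finset.disjoint_left.1 hd ha haj
        | exact Finset.disjoint_left.1 hd.symm ha haj
        | (exact hij ((h2fin i (by assumption) (by assumption)).trans
            (h2fin j (by assumption) (by assumption)).symm))
        | simp_all
  · -- cover
    ext x
    simp only [Finset.mem_biUnion, Finset.mem_univ, true_and, iff_true]
    rcases x with j | t
    · have hx : j ∈ S₁ ∪ S₂ := by rw [hcover]; exact Finset.mem_univ _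
      rcases Finset.mem_union.1 hx with h | h
      · exact ⟨1, Finset.mem_union_left _ (by simp [redAlloc, Finset.mem_image_of_mem _ h])⟩
      · exact ⟨2, Finset.mem_union_left _ (by simp [redAlloc, Finset.mem_image_of_mem _ h])⟩
    · fin_cases t
      · exact ⟨k, Finset.mem_union_right _ (by simp)⟩
      · exact ⟨0, Finset.mem_union_left _ (by simp [redAlloc])⟩
  · -- EQ1
    obtain ⟨g, hg, hgle⟩ := hle k i hne
    exact ⟨g, hg, hgle.trans (hge k j)⟩
  · -- ex-ante
    simp only [Fin.sum_univ_three, htot]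
    fin_cases i <;> fin_cases j <;> norm_num [Fin.ext_iff, Matrix.cons_val_two, Matrix.tail_cons, Matrix.head_cons] <;> ring
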